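/- Let G be a finite simple graph, T ⊆ V(G), and let G' be the split graph obtained from G by taking vertex set V(G) ∪ E(G), making V(G) a clique, keeping E(G) an independent set, and joining each e ∈ E(G) to its two endpoints. Then G has a vertex cover of size at most k if and only if G' has an odd E(G)-cycle transversal of size at most k. -/

import Mathlib

open SimpleGraph

/-- The split graph obtained from `G`: vertex set `V(G) ∪ E(G)`, with `V(G)` a clique,
`E(G)` an independent set, and each edge joined to its two endpoints. -/
def splitG {V : Type*} (G : SimpleGraph V) : SimpleGraph (V ⊕ G.edgeSet) where
  Adj a b :=
    match a, b with
    | Sum.inl u, Sum.inl v => u ≠ v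
    | Sum.inl u, Sum.inr e => u ∈ (e : Sym2 V)
    | Sum.inr e, Sum.inl u => u ∈ (e : Sym2 V)
    | Sum.inr _, Sum.inr _ => False
  symm := by
    constructor
    rintro (u | e) (v | f) h <;> first | exact h.symm | exact h | exact h.elim
  loopless := by
    constructor
    rintro (u | e) h
    exacts [h rfl, h]

section Aux

variable {V : Type*} {G : SimpleGraph V}

lemma splitG_adj_inr {e : G.edgeSet} {b : V ⊕ G.edgeSet}
    (h : (splitG G).Adj (Sum.inr e) b) : ∃ w : V, b = Sum.inl w ∧ w ∈ (e : Sym2 V) := by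
  cases b with
  | inl w => exact ⟨w, rfl, h⟩
  | inr f => exact h.elim

lemma splitG_endpoints_mem {e : G.edgeSet}
    (c : (splitG G).Walk (Sum.inr e) (Sum.inr e)) (hc : c.IsCycle)
    {u v : V} (huv : (e : Sym2 V) = s(u, v)) :
    Sum.inl u ∈ c.support ∧ Sum.inl v ∈ c.support := by
  have hlen3 : 3 ≤ c.length := hc.three_le_length
  cases c with
  | nil => simp at hlen3
  | @cons _ b _ hadj q =>
    have hq : q.IsPath := ((SimpleGraph.Walk.cons_isCycle_iff q hadj).mp hc).1
    have hqlen : 2 ≤ q.length := by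
      simp only [SimpleGraph.Walk.length_cons] at hlen3; omega
    have hpr : q.reverse.IsPath := (SimpleGraph.Walk.isPath_reverse_iff q).mpr hq
    have hnil : ¬ q.reverse.Nil := by
      rw [SimpleGraph.Walk.not_nil_iff_lt_length, SimpleGraph.Walk.length_reverse]; omega
    obtain ⟨b', hadj', r, hr⟩ := SimpleGraph.Walk.not_nil_iff.mp hnil
    obtain ⟨w, rfl, hw⟩ := splitG_adj_inr hadj
    obtain ⟨w', hb', hw'⟩ := splitG_adj_inr hadj'
    subst hb'
    have hne : w ≠ w' := by
      rintro rfl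
      have hrpath : r.IsPath := by
        have h2 := hpr; rw [hr] at h2; exact h2.of_cons
      have hrnil : r = SimpleGraph.Walk.nil := SimpleGraph.Walk.isPath_iff_eq_nil.mp hrpath
      have h1 : q.reverse.length = 1 := by rw [hr, hrnil]; simp
      rw [SimpleGraph.Walk.length_reverse] at h1; omega
    have hbmem : Sum.inl w ∈ (SimpleGraph.Walk.cons hadj q).support := by
      simp [SimpleGraph.Walk.support_cons, SimpleGraph.Walk.start_mem_support]
    have hbmem' : Sum.inl w' ∈ (SimpleGraph.Walk.cons hadj q).support := by
      have h2 : Sum.inl (β := G.edgeSet) w' ∈ q.reverse.support := by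
        rw [hr]; simp
      rw [SimpleGraph.Walk.support_reverse, List.mem_reverse] at h2
      simp only [SimpleGraph.Walk.support_cons, List.mem_cons]
      exact Or.inr h2
    rw [huv] at hw hw'
    rw [Sym2.mem_iff] at hw hw'
    have hcases : (w = u ∧ w' = v) ∨ (w = v ∧ w' = u) := by
      rcases hw with rfl | rfl <;> rcases hw' with rfl | rfl
      · exact absurd rfl hne
      · exact Or.inl ⟨rfl, rfl⟩
      · exact Or.inr ⟨rfl, rfl⟩
      · exact absurd rfl hne
    rcases hcases with ⟨rfl, rfl⟩ | ⟨rfl, rfl⟩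
    · exact ⟨hbmem, hbmem'⟩
    · exact ⟨hbmem', hbmem⟩

lemma splitG_endpoints_mem' {e : G.edgeSet} {x : V ⊕ G.edgeSet}
    (c : (splitG G).Walk x x) (hc : c.IsCycle)
    (he : Sum.inr e ∈ c.support) {u v : V} (huv : (e : Sym2 V) = s(u, v)) :
    Sum.inl u ∈ c.support ∧ Sum.inl v ∈ c.support := by
  classical
  have h1 := splitG_endpoints_mem (c.rotate _ he) (hc.rotate he) huv
  have h2 := SimpleGraph.Walk.support_rotate c _ he
  have key : ∀ w : V, Sum.inl w ∈ (c.rotate _ he).support → Sum.inl w ∈ c.support := by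
    intro w hw
    have hsup := SimpleGraph.Walk.support_eq_cons (c.rotate _ he)
    rw [hsup] at hw
    rcases List.mem_cons.mp hw with h | h
    · exact absurd h (by simp)
    · exact List.mem_of_mem_tail (h2.mem_iff.mp h)
  exact ⟨key u h1.1, key v h1.2⟩

end Aux

theorem stmt_19 {V : Type*} [Fintype V] [DecidableEq V]
    (G : SimpleGraph V) (k : ℕ) (hk : 1 ≤ k) :
    (∃ S : Finset V, S.card ≤ k ∧
        ∀ u v : V, G.Adj u v → (u ∈ S ∨ v ∈ S)) ↔
    (∃ S : Finset (V ⊕ G.edgeSet), S.card ≤ k ∧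
        ∀ (x : V ⊕ G.edgeSet) (c : (splitG G).Walk x x), c.IsCycle → Odd c.length →
          (∃ e : G.edgeSet, Sum.inr e ∈ c.support) →
          ∃ y ∈ S, y ∈ c.support) := by
  classical
  constructor
  · rintro ⟨S, hcard, hcov⟩
    refine ⟨S.map ⟨Sum.inl, Sum.inl_injective⟩, by simpa using hcard, ?_⟩
    rintro x c hc hodd ⟨e, he⟩
    obtain ⟨ew, hew⟩ := e
    induction ew using Sym2.ind with
    | _ u v =>
      have hadj : G.Adj u v := hew
      obtain ⟨hu, hv⟩ := splitG_endpoints_mem' c hc he (u := u) (v := v) rfl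
      rcases hcov u v hadj with h | h
      · exact ⟨Sum.inl u, by simpa using h, hu⟩
      · exact ⟨Sum.inl v, by simpa using h, hv⟩
  · rintro ⟨S, hcard, htr⟩
    refine ⟨S.image (Sum.elim id (fun e : G.edgeSet => (e : Sym2 V).out.1)),
      le_trans Finset.card_image_le hcard, ?_⟩
    intro u v hadj
    have hne : u ≠ v := hadj.ne
    set e : G.edgeSet := ⟨s(u, v), hadj⟩ with hedef
    have h1 : (splitG G).Adj (Sum.inl u) (Sum.inl v) := hne
    have h2 : (splitG G).Adj (Sum.inl v) (Sum.inr e) := Sym2.mem_mk_right u v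
    have h3 : (splitG G).Adj (Sum.inr e) (Sum.inl u) := Sym2.mem_mk_left u v
    set t : (splitG G).Walk (Sum.inl u) (Sum.inl u) :=
      .cons h1 (.cons h2 (.cons h3 .nil)) with htdef
    have ht : t.IsCycle := by
      rw [SimpleGraph.Walk.isCycle_def]
      refine ⟨⟨?_⟩, by simp [htdef], ?_⟩
      · simp [htdef, SimpleGraph.Walk.edges_cons, Sym2.eq, Sym2.rel_iff', hne, hne.symm]
      · simp [htdef, hne.symm]
    have hodd : Odd t.length := by
      rw [htdef]; exact ⟨1, by simp⟩
    obtain ⟨y, hyS, hy⟩ := htr _ t ht hodd ⟨e, by simp [htdef]⟩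
    have hmemim : Sum.elim id (fun e : G.edgeSet => (e : Sym2 V).out.1) y ∈
        S.image (Sum.elim id (fun e : G.edgeSet => (e : Sym2 V).out.1)) :=
      Finset.mem_image_of_mem _ hyS
    simp only [htdef, SimpleGraph.Walk.support_cons, SimpleGraph.Walk.support_nil,
      List.mem_cons, List.mem_singleton] at hy
    rcases hy with rfl | rfl | rfl | (rfl | h)
    · exact Or.inl hmemim
    · exact Or.inr hmemim
    · have hfeq : Sum.elim id (fun e : G.edgeSet => (e : Sym2 V).out.1) (Sum.inr e)
          = (s(u, v) : Sym2 V).out.1 := rfl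
      rw [hfeq] at hmemim
      have hout : (s(u, v) : Sym2 V).out.1 ∈ s(u, v) := Sym2.out_fst_mem _
      rw [Sym2.mem_iff] at hout
      rcases hout with h' | h'
      · exact Or.inl (h' ▸ hmemim)
      · exact Or.inr (h' ▸ hmemim)
    · exact Or.inl hmemim
    · exact absurd h List.not_mem_nil
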